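/- Let S be a random vector uniformly distributed on the eight points (0,1,0,2), (0,1,2,0), (0,2,1,0), (0,2,0,1), (1,0,0,2), (1,0,2,0), (2,0,1,0), (2,0,0,1) in ℝ^4 (each with probability 1/8). Then S is NRTD: for all disjoint subsets I, J of {1,2,3,4} and all x_J ≤ x_J* componentwise such that both conditioning events have positive probability, [S_I | S_J > x_J] ≥_st [S_I | S_J > x_J*]. -/

import Mathlib

open scoped Classical
open Finset

noncomputable section

/-- Probability of the event `A` on a finite sample space with weights `w`. -/
def Pr {Ω : Type*} [Fintype Ω] (w : Ω → ℝ) (A : Ω → Prop) : ℝ :=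
  ∑ ω : Ω, if A ω then w ω else 0

/-- Expectation of `f` on a finite sample space with weights `w`. -/
def Expec {Ω : Type*} [Fintype Ω] (w : Ω → ℝ) (f : Ω → ℝ) : ℝ :=
  ∑ ω : Ω, w ω * f ω

/-- Conditional expectation of `f` given the event `A` under weights `w`. -/
def CExp {Ω : Type*} [Fintype Ω] (w : Ω → ℝ) (A : Ω → Prop) (f : Ω → ℝ) : ℝ :=
  (∑ ω : Ω, if A ω then w ω * f ω else 0) / Pr w A

/-- `[X_I | A] ≤_st [X_I | B]` : the conditional distribution of the subvector `X_I`
given the event `A` is dominated, in the usual stochastic order, by the conditional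
distribution of `X_I` given `B`; i.e. conditional expectations of every bounded
coordinatewise increasing function compare. -/
def CondSubvecStochLE {Ω : Type*} [Fintype Ω] {n : ℕ} (w : Ω → ℝ)
    (X : Ω → Fin n → ℝ) (I : Finset (Fin n)) (A B : Ω → Prop) : Prop :=
  ∀ φ : ({i : Fin n // i ∈ I} → ℝ) → ℝ, Monotone φ → (∃ C, ∀ v, |φ v| ≤ C) →
    CExp w A (fun ω => φ fun i => X ω i.1) ≤ CExp w B (fun ω => φ fun i => X ω i.1)

/-- Negative regression dependence: `[X_I | X_J = x_J] ≥_st [X_I | X_J = x_J*]`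
whenever `x_J ≤ x_J*` componentwise and both conditioning events have
positive probability. -/
def IsNRD {Ω : Type*} [Fintype Ω] {n : ℕ} (w : Ω → ℝ) (X : Ω → Fin n → ℝ) : Prop :=
  ∀ I J : Finset (Fin n), Disjoint I J → ∀ x y : Fin n → ℝ, (∀ j ∈ J, x j ≤ y j) →
    0 < Pr w (fun ω => ∀ j ∈ J, X ω j = x j) →
    0 < Pr w (fun ω => ∀ j ∈ J, X ω j = y j) →
    CondSubvecStochLE w X I (fun ω => ∀ j ∈ J, X ω j = y j)
      (fun ω => ∀ j ∈ J, X ω j = x j)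

/-- Negative left-tail dependence: `[X_I | X_J ≤ x_J] ≥_st [X_I | X_J ≤ x_J*]`
whenever `x_J ≤ x_J*` componentwise and both conditioning events have
positive probability. -/
def IsNLTD {Ω : Type*} [Fintype Ω] {n : ℕ} (w : Ω → ℝ) (X : Ω → Fin n → ℝ) : Prop :=
  ∀ I J : Finset (Fin n), Disjoint I J → ∀ x y : Fin n → ℝ, (∀ j ∈ J, x j ≤ y j) →
    0 < Pr w (fun ω => ∀ j ∈ J, X ω j ≤ x j) →
    0 < Pr w (fun ω => ∀ j ∈ J, X ω j ≤ y j) →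
    CondSubvecStochLE w X I (fun ω => ∀ j ∈ J, X ω j ≤ y j)
      (fun ω => ∀ j ∈ J, X ω j ≤ x j)

/-- Negative right-tail dependence: `[X_I | X_J > x_J] ≥_st [X_I | X_J > x_J*]`
whenever `x_J ≤ x_J*` componentwise and both conditioning events have
positive probability. -/
def IsNRTD {Ω : Type*} [Fintype Ω] {n : ℕ} (w : Ω → ℝ) (X : Ω → Fin n → ℝ) : Prop :=
  ∀ I J : Finset (Fin n), Disjoint I J → ∀ x y : Fin n → ℝ, (∀ j ∈ J, x j ≤ y j) →
    0 < Pr w (fun ω => ∀ j ∈ J, x j < X ω j) →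
    0 < Pr w (fun ω => ∀ j ∈ J, y j < X ω j) →
    CondSubvecStochLE w X I (fun ω => ∀ j ∈ J, y j < X ω j)
      (fun ω => ∀ j ∈ J, x j < X ω j)

/-- Negative association on a finite weighted sample space:
`Cov(ψ₁(X_{A₁}), ψ₂(X_{A₂})) ≤ 0` for disjoint `A₁, A₂` and bounded
coordinatewise increasing `ψ₁, ψ₂`. -/
def IsNAfin {Ω : Type*} [Fintype Ω] {n : ℕ} (w : Ω → ℝ) (X : Ω → Fin n → ℝ) : Prop :=
  ∀ A₁ A₂ : Finset (Fin n), Disjoint A₁ A₂ →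
    ∀ ψ₁ : ({i : Fin n // i ∈ A₁} → ℝ) → ℝ, ∀ ψ₂ : ({i : Fin n // i ∈ A₂} → ℝ) → ℝ,
      Monotone ψ₁ → Monotone ψ₂ → (∃ C, ∀ v, |ψ₁ v| ≤ C) → (∃ C, ∀ v, |ψ₂ v| ≤ C) →
      Expec w (fun ω => (ψ₁ fun i => X ω i.1) * (ψ₂ fun i => X ω i.1))
        ≤ Expec w (fun ω => ψ₁ fun i => X ω i.1) * Expec w (fun ω => ψ₂ fun i => X ω i.1)

/-- The uniform distribution on the permutations of `Fin n`. -/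
def unifPerm (n : ℕ) : Equiv.Perm (Fin n) → ℝ := fun _ => (Nat.factorial n : ℝ)⁻¹

/-- The random vector with the permutation distribution on `a`:
`X = (a_{σ(1)}, …, a_{σ(n)})` for a uniformly random permutation `σ`. -/
def permVec {n : ℕ} (a : Fin n → ℝ) (σ : Equiv.Perm (Fin n)) : Fin n → ℝ :=
  fun i => a (σ i)

/-- The score vector uniformly distributed on the eight points
`(0,1,0,2), (0,1,2,0), (0,2,1,0), (0,2,0,1), (1,0,0,2), (1,0,2,0), (2,0,1,0),
(2,0,0,1)`. -/
def ko8Score : Fin 8 → Fin 4 → ℝ :=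
  ![![0, 1, 0, 2], ![0, 1, 2, 0], ![0, 2, 1, 0], ![0, 2, 0, 1],
    ![1, 0, 0, 2], ![1, 0, 2, 0], ![2, 0, 1, 0], ![2, 0, 0, 1]]

def ko8Unif : Fin 8 → ℝ := fun _ => (8 : ℝ)⁻¹


/-! ### Auxiliary development for the NRTD theorem -/

/-- Natural-number version of the score table. -/
def N8 : Fin 8 → Fin 4 → ℕ :=
  ![![0, 1, 0, 2], ![0, 1, 2, 0], ![0, 2, 1, 0], ![0, 2, 0, 1],
    ![1, 0, 0, 2], ![1, 0, 2, 0], ![2, 0, 1, 0], ![2, 0, 0, 1]]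

/-- Membership in the event `{S_j ≥ q_j for all j}`. -/
def inE (q0 q1 q2 q3 : Fin 4) (ω : Fin 8) : Prop :=
  (q0 : ℕ) ≤ N8 ω 0 ∧ (q1 : ℕ) ≤ N8 ω 1 ∧ (q2 : ℕ) ≤ N8 ω 2 ∧ (q3 : ℕ) ≤ N8 ω 3

instance inE.dec (q0 q1 q2 q3 ω) : Decidable (inE q0 q1 q2 q3 ω) := by
  unfold inE; infer_instance

/-- Number of sample points in the event. -/
def cnt (q0 q1 q2 q3 : Fin 4) : ℕ := ∑ ω : Fin 8, if inE q0 q1 q2 q3 ω then 1 else 0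

def bitA8 : Fin 8 → Fin 2 := ![1,1,1,1,0,0,0,0]
def bitB8 : Fin 8 → Fin 2 := ![1,0,0,1,1,0,0,1]
def bitC8 : Fin 8 → Fin 2 := ![0,0,1,1,0,0,1,1]

/-- An explicit monotone coupling between the conditional laws. -/
def K8 (p0 p1 p2 p3 q0 q1 q2 q3 : Fin 4) (ω ω' : Fin 8) : ℕ :=
  if inE q0 q1 q2 q3 ω ∧ inE p0 p1 p2 p3 ω' ∧
      ((q0 = 0 ∧ q1 = 0) → bitA8 ω = bitA8 ω') ∧
      ((q2 = 0 ∧ q3 = 0) → bitB8 ω = bitB8 ω') ∧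
      ((q0 ≤ 1 ∧ q1 ≤ 1 ∧ q2 ≤ 1 ∧ q3 ≤ 1) → bitC8 ω = bitC8 ω')
  then 1 else 0

set_option maxRecDepth 100000 in
set_option maxHeartbeats 1000000 in
lemma K8_M1 : ∀ q0 q1 q2 q3 : Fin 4, 0 < cnt q0 q1 q2 q3 → ∀ p0 p1 p2 p3 : Fin 4,
    (p0 ≤ q0 ∧ p1 ≤ q1 ∧ p2 ≤ q2 ∧ p3 ≤ q3) →
    ∀ ω, (∑ ω', K8 p0 p1 p2 p3 q0 q1 q2 q3 ω ω') * cnt q0 q1 q2 q3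
      = if inE q0 q1 q2 q3 ω then cnt p0 p1 p2 p3 else 0 := by decide

set_option maxRecDepth 100000 in
set_option maxHeartbeats 1000000 in
lemma K8_M2 : ∀ q0 q1 q2 q3 : Fin 4, 0 < cnt q0 q1 q2 q3 → ∀ p0 p1 p2 p3 : Fin 4,
    (p0 ≤ q0 ∧ p1 ≤ q1 ∧ p2 ≤ q2 ∧ p3 ≤ q3) →
    ∀ ω', (∑ ω, K8 p0 p1 p2 p3 q0 q1 q2 q3 ω ω')
      = if inE p0 p1 p2 p3 ω' then 1 else 0 := by decide

set_option maxRecDepth 100000 in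
set_option maxHeartbeats 1000000 in
set_option synthInstance.maxHeartbeats 1000000 in
set_option synthInstance.maxSize 4096 in
lemma K8_M3 : ∀ q0 q1 q2 q3 : Fin 4, 0 < cnt q0 q1 q2 q3 → ∀ p0 p1 p2 p3 : Fin 4,
    (p0 ≤ q0 ∧ p1 ≤ q1 ∧ p2 ≤ q2 ∧ p3 ≤ q3) →
    ∀ ω ω', K8 p0 p1 p2 p3 q0 q1 q2 q3 ω ω' ≠ 0 →
      (q0 = 0 → N8 ω 0 ≤ N8 ω' 0) ∧ (q1 = 0 → N8 ω 1 ≤ N8 ω' 1) ∧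
      (q2 = 0 → N8 ω 2 ≤ N8 ω' 2) ∧ (q3 = 0 → N8 ω 3 ≤ N8 ω' 3) := by decide

lemma score_eq_N8 : ∀ (ω : Fin 8) (i : Fin 4), ko8Score ω i = (N8 ω i : ℝ) := by
  intro ω i
  fin_cases ω <;> fin_cases i <;> norm_num [ko8Score, N8]

lemma N8_le_two : ∀ (ω : Fin 8) (i : Fin 4), N8 ω i ≤ 2 := by decide

/-- The threshold level of a real number (w.r.t. scores in `{0,1,2}`). -/
def lvl8 (t : ℝ) : Fin 4 :=
  if t < 0 then 0 else if t < 1 then 1 else if t < 2 then 2 else 3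

lemma lvl8_iff (t : ℝ) (n : ℕ) (hn : n ≤ 2) : t < n ↔ (lvl8 t : ℕ) ≤ n := by
  unfold lvl8
  split_ifs with h1 h2 h3
  · exact iff_of_true (h1.trans_le (Nat.cast_nonneg n)) (by simp)
  · show t < n ↔ 1 ≤ n
    constructor
    · intro h
      by_contra hc
      have hn0 : n = 0 := by omega
      subst hn0
      exact h1 (by exact_mod_cast h)
    · intro h
      have h' : (1 : ℝ) ≤ n := by exact_mod_cast h
      linarith
  · show t < n ↔ 2 ≤ n
    constructor
    · intro h
      have h1' : (1 : ℝ) ≤ t := not_lt.mp h2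
      have : (1 : ℝ) < n := lt_of_le_of_lt h1' h
      have : 1 < n := by exact_mod_cast this
      omega
    · intro h
      have hn2 : n = 2 := le_antisymm hn h
      subst hn2
      exact_mod_cast h3
  · show t < n ↔ 3 ≤ n
    constructor
    · intro h
      have h2' : (2 : ℝ) ≤ t := not_lt.mp h3
      have : (2 : ℝ) < n := lt_of_le_of_lt h2' h
      have : 2 < n := by exact_mod_cast this
      omega
    · intro h; omega
  
lemma lvl8_mono {t s : ℝ} (h : t ≤ s) : lvl8 t ≤ lvl8 s := by
  unfold lvl8
  split_ifs <;> first | decide | (exfalso; linarith)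

lemma Pr_eq_cnt (A : Fin 8 → Prop) (q0 q1 q2 q3 : Fin 4)
    (h : ∀ ω, A ω ↔ inE q0 q1 q2 q3 ω) :
    Pr ko8Unif A = (cnt q0 q1 q2 q3 : ℝ) * (8 : ℝ)⁻¹ := by
  unfold Pr cnt ko8Unif
  rw [Nat.cast_sum, Finset.sum_mul]
  apply Finset.sum_congr rfl
  intro ω _
  rw [if_congr (h ω) rfl rfl]
  split_ifs <;> simp

lemma CExp_eq_cnt (A : Fin 8 → Prop) (q0 q1 q2 q3 : Fin 4)
    (h : ∀ ω, A ω ↔ inE q0 q1 q2 q3 ω) (f : Fin 8 → ℝ) :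
    CExp ko8Unif A f
      = (∑ ω, if inE q0 q1 q2 q3 ω then f ω else 0) / (cnt q0 q1 q2 q3 : ℝ) := by
  unfold CExp
  rw [Pr_eq_cnt A q0 q1 q2 q3 h]
  have hnum : (∑ ω, if A ω then ko8Unif ω * f ω else 0)
      = (8 : ℝ)⁻¹ * ∑ ω, if inE q0 q1 q2 q3 ω then f ω else 0 := by
    rw [Finset.mul_sum]
    apply Finset.sum_congr rfl
    intro ω _
    rw [if_congr (h ω) rfl rfl]
    unfold ko8Unif
    split_ifs <;> ring
  rw [hnum, mul_comm ((cnt q0 q1 q2 q3 : ℝ)) ((8 : ℝ)⁻¹)]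
  exact mul_div_mul_left _ _ (by norm_num)

lemma cnt_pos_of_Pr_pos (A : Fin 8 → Prop) (q0 q1 q2 q3 : Fin 4)
    (h : ∀ ω, A ω ↔ inE q0 q1 q2 q3 ω) (hp : 0 < Pr ko8Unif A) :
    0 < cnt q0 q1 q2 q3 := by
  rcases Nat.eq_zero_or_pos (cnt q0 q1 q2 q3) with h0 | h1
  · rw [Pr_eq_cnt A q0 q1 q2 q3 h, h0] at hp
    norm_num at hp
  · exact h1

lemma event_iff_inE (J : Finset (Fin 4)) (x : Fin 4 → ℝ) (ω : Fin 8) :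
    (∀ j ∈ J, x j < ko8Score ω j)
      ↔ inE (if 0 ∈ J then lvl8 (x 0) else 0) (if 1 ∈ J then lvl8 (x 1) else 0)
          (if 2 ∈ J then lvl8 (x 2) else 0) (if 3 ∈ J then lvl8 (x 3) else 0) ω := by
  have key : ∀ j : Fin 4,
      (((if j ∈ J then lvl8 (x j) else 0 : Fin 4) : ℕ) ≤ N8 ω j)
        ↔ (j ∈ J → x j < ko8Score ω j) := by
    intro j
    split_ifs with hj
    · simp only [hj, forall_true_left]
      rw [score_eq_N8]
      exact (lvl8_iff (x j) (N8 ω j) (N8_le_two ω j)).symm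
    · simp [hj]
  constructor
  · intro h
    refine ⟨?_, ?_, ?_, ?_⟩
    · exact (key 0).mpr (h 0)
    · exact (key 1).mpr (h 1)
    · exact (key 2).mpr (h 2)
    · exact (key 3).mpr (h 3)
  · rintro ⟨h0, h1, h2, h3⟩ j hj
    fin_cases j
    · exact (key 0).mp h0 hj
    · exact (key 1).mp h1 hj
    · exact (key 2).mp h2 hj
    · exact (key 3).mp h3 hj


/-- The core coupling inequality: if `A`, `B` are threshold events with levels
`qf ≥ pf` and `g` is monotone on the coordinates left free by `qf`, then the
conditional expectation of `g` given `A` is at most that given `B`. -/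
lemma key_ineq (A B : Fin 8 → Prop) (qf pf : Fin 4 → Fin 4)
    (hAiff : ∀ ω, A ω ↔ inE (qf 0) (qf 1) (qf 2) (qf 3) ω)
    (hBiff : ∀ ω, B ω ↔ inE (pf 0) (pf 1) (pf 2) (pf 3) ω)
    (hple : ∀ j, pf j ≤ qf j)
    (hA : 0 < Pr ko8Unif A) (hB : 0 < Pr ko8Unif B)
    (g : Fin 8 → ℝ)
    (hmono : ∀ ω ω' : Fin 8, (∀ j, qf j = 0 → N8 ω j ≤ N8 ω' j) → g ω ≤ g ω') :
    CExp ko8Unif A g ≤ CExp ko8Unif B g := by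
  have hcq : 0 < cnt (qf 0) (qf 1) (qf 2) (qf 3) :=
    cnt_pos_of_Pr_pos A _ _ _ _ hAiff hA
  have hcp : 0 < cnt (pf 0) (pf 1) (pf 2) (pf 3) :=
    cnt_pos_of_Pr_pos B _ _ _ _ hBiff hB
  have hM1 := K8_M1 (qf 0) (qf 1) (qf 2) (qf 3) hcq (pf 0) (pf 1) (pf 2) (pf 3)
    ⟨hple 0, hple 1, hple 2, hple 3⟩
  have hM2 := K8_M2 (qf 0) (qf 1) (qf 2) (qf 3) hcq (pf 0) (pf 1) (pf 2) (pf 3)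
    ⟨hple 0, hple 1, hple 2, hple 3⟩
  have hM3 := K8_M3 (qf 0) (qf 1) (qf 2) (qf 3) hcq (pf 0) (pf 1) (pf 2) (pf 3)
    ⟨hple 0, hple 1, hple 2, hple 3⟩
  have horder : ∀ ω ω',
      K8 (pf 0) (pf 1) (pf 2) (pf 3) (qf 0) (qf 1) (qf 2) (qf 3) ω ω' ≠ 0 →
      g ω ≤ g ω' := by
    intro ω ω' hne
    apply hmono
    intro j
    have hM := hM3 ω ω' hne
    fin_cases j
    · exact hM.1
    · exact hM.2.1
    · exact hM.2.2.1
    · exact hM.2.2.2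
  have hM1R : ∀ ω,
      (∑ ω', (K8 (pf 0) (pf 1) (pf 2) (pf 3) (qf 0) (qf 1) (qf 2) (qf 3) ω ω' : ℝ))
          * (cnt (qf 0) (qf 1) (qf 2) (qf 3) : ℝ)
        = if inE (qf 0) (qf 1) (qf 2) (qf 3) ω
            then (cnt (pf 0) (pf 1) (pf 2) (pf 3) : ℝ) else 0 := by
    intro ω
    have h := hM1 ω
    by_cases hω : inE (qf 0) (qf 1) (qf 2) (qf 3) ω
    · rw [if_pos hω]; rw [if_pos hω] at h; exact_mod_cast h
    · rw [if_neg hω]; rw [if_neg hω] at h; exact_mod_cast h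
  have hM2R : ∀ ω',
      (∑ ω, (K8 (pf 0) (pf 1) (pf 2) (pf 3) (qf 0) (qf 1) (qf 2) (qf 3) ω ω' : ℝ))
        = if inE (pf 0) (pf 1) (pf 2) (pf 3) ω' then (1 : ℝ) else 0 := by
    intro ω'
    have h := hM2 ω'
    by_cases hω : inE (pf 0) (pf 1) (pf 2) (pf 3) ω'
    · rw [if_pos hω]; rw [if_pos hω] at h; exact_mod_cast h
    · rw [if_neg hω]; rw [if_neg hω] at h; exact_mod_cast h
  rw [CExp_eq_cnt A _ _ _ _ hAiff g, CExp_eq_cnt B _ _ _ _ hBiff g]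
  have hcq' : (0 : ℝ) < (cnt (qf 0) (qf 1) (qf 2) (qf 3) : ℝ) := by exact_mod_cast hcq
  have hcp' : (0 : ℝ) < (cnt (pf 0) (pf 1) (pf 2) (pf 3) : ℝ) := by exact_mod_cast hcp
  rw [div_le_div_iff₀ hcq' hcp']
  calc (∑ ω, if inE (qf 0) (qf 1) (qf 2) (qf 3) ω then g ω else 0)
        * (cnt (pf 0) (pf 1) (pf 2) (pf 3) : ℝ)
      = ∑ ω, (if inE (qf 0) (qf 1) (qf 2) (qf 3) ω
          then (cnt (pf 0) (pf 1) (pf 2) (pf 3) : ℝ) else 0) * g ω := by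
        rw [Finset.sum_mul]
        exact Finset.sum_congr rfl (fun ω _ => by split_ifs <;> ring)
    _ = ∑ ω, ((∑ ω', (K8 (pf 0) (pf 1) (pf 2) (pf 3) (qf 0) (qf 1) (qf 2) (qf 3) ω ω' : ℝ))
          * (cnt (qf 0) (qf 1) (qf 2) (qf 3) : ℝ)) * g ω :=
        Finset.sum_congr rfl (fun ω _ => by rw [hM1R ω])
    _ = (∑ ω, ∑ ω',
          (K8 (pf 0) (pf 1) (pf 2) (pf 3) (qf 0) (qf 1) (qf 2) (qf 3) ω ω' : ℝ) * g ω)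
          * (cnt (qf 0) (qf 1) (qf 2) (qf 3) : ℝ) := by
        rw [Finset.sum_mul]
        exact Finset.sum_congr rfl (fun ω _ => by rw [← Finset.sum_mul]; ring)
    _ ≤ (∑ ω, ∑ ω',
          (K8 (pf 0) (pf 1) (pf 2) (pf 3) (qf 0) (qf 1) (qf 2) (qf 3) ω ω' : ℝ) * g ω')
          * (cnt (qf 0) (qf 1) (qf 2) (qf 3) : ℝ) := by
        apply mul_le_mul_of_nonneg_right _ (le_of_lt hcq')
        apply Finset.sum_le_sum
        intro ω _
        apply Finset.sum_le_sum
        intro ω' _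
        rcases eq_or_ne (K8 (pf 0) (pf 1) (pf 2) (pf 3) (qf 0) (qf 1) (qf 2) (qf 3) ω ω') 0
          with h0 | hne
        · simp [h0]
        · exact mul_le_mul_of_nonneg_left (horder ω ω' hne) (Nat.cast_nonneg _)
    _ = (∑ ω', (∑ ω,
          (K8 (pf 0) (pf 1) (pf 2) (pf 3) (qf 0) (qf 1) (qf 2) (qf 3) ω ω' : ℝ)) * g ω')
          * (cnt (qf 0) (qf 1) (qf 2) (qf 3) : ℝ) := by
        rw [Finset.sum_comm]
        congr 1
        exact Finset.sum_congr rfl (fun ω' _ => (Finset.sum_mul _ _ _).symm)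
    _ = (∑ ω', if inE (pf 0) (pf 1) (pf 2) (pf 3) ω' then g ω' else 0)
          * (cnt (qf 0) (qf 1) (qf 2) (qf 3) : ℝ) := by
        congr 1
        refine Finset.sum_congr rfl (fun ω' _ => ?_)
        rw [hM2R ω']
        split_ifs <;> ring

/-- the random vector `S` uniform on the eight points above (scores of
a 4-player knockout tournament with deterministic draw and equal strength) is NRTD:
`[S_I | S_J > x_J] ≥_st [S_I | S_J > x_J*]` for all disjoint `I, J ⊆ {1,2,3,4}` and
all `x_J ≤ x_J*` componentwise with positive-probability conditioning events. -/
theorem knockout4_equal_strength_NRTD : IsNRTD ko8Unif ko8Score := by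
  intro I J hIJ x y hxy hxpos hypos φ hφ _
  refine key_ineq _ _ (fun j => if j ∈ J then lvl8 (y j) else 0)
      (fun j => if j ∈ J then lvl8 (x j) else 0)
      (fun ω => event_iff_inE J y ω) (fun ω => event_iff_inE J x ω)
      (fun j => ?_) hypos hxpos _ ?_
  · show _ ≤ _
    split_ifs with hj
    · exact lvl8_mono (hxy j hj)
    · exact le_rfl
  · intro ω ω' hord
    apply hφ
    intro i
    show ko8Score ω i.1 ≤ ko8Score ω' i.1
    have h1 : ko8Score ω i.1 = (N8 ω i.1 : ℝ) := score_eq_N8 ω i.1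
    have h2 : ko8Score ω' i.1 = (N8 ω' i.1 : ℝ) := score_eq_N8 ω' i.1
    rw [h1, h2]
    have hiJ : (i.1 : Fin 4) ∉ J := fun hmem => Finset.disjoint_left.mp hIJ i.2 hmem
    exact Nat.cast_le.mpr (hord i.1 (by simp [hiJ]))
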